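/- arXiv:2208.12391 — 4 statements merged into one kernel-verified Lean document; each statement's English description precedes it below -/
import Mathlib

section
/- For every ξ ∈ C, the W-orbit of (ξ, ξ) in C × C equals the set {(ξ,ξ), (ξ⁻¹,ξ⁻¹), (ξ²,ξ⁻¹), (ξ⁻¹,ξ²), (ξ,ξ⁻²), (ξ⁻²,ξ)}. Its cardinality is 1 if ξ = 1, is 3 if ξ has order 2, is 2 if ξ has order 3, and is 6 if ξ has order at least 4 or infinite order. -/
/-- The permutation `a` of `C × C`, `a(ξ₁, ξ₂) = (ξ₂, ξ₁)` (the reflection `s_α`). -/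
def aG2 (C : Type*) [CommGroup C] : Equiv.Perm (C × C) where
  toFun p := (p.2, p.1)
  invFun p := (p.2, p.1)
  left_inv p := rfl
  right_inv p := rfl

/-- The permutation `b` of `C × C`, `b(ξ₁, ξ₂) = (ξ₁ξ₂, ξ₂⁻¹)` (the reflection `s_β`). -/
def bG2 (C : Type*) [CommGroup C] : Equiv.Perm (C × C) where
  toFun p := (p.1 * p.2, p.2⁻¹)
  invFun p := (p.1 * p.2, p.2⁻¹)
  left_inv p := by simp
  right_inv p := by simp

/-- The subgroup of `Perm (C × C)` generated by `a` and `b` (the Weyl group of `G₂`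
acting on characters of the torus). -/
def WG2 (C : Type*) [CommGroup C] : Subgroup (Equiv.Perm (C × C)) :=
  Subgroup.closure {aG2 C, bG2 C}

lemma aG2_mem {C : Type*} [CommGroup C] : aG2 C ∈ WG2 C :=
  Subgroup.subset_closure (by simp)

lemma bG2_mem {C : Type*} [CommGroup C] : bG2 C ∈ WG2 C :=
  Subgroup.subset_closure (by simp)

lemma aG2_apply {C : Type*} [CommGroup C] (p : C × C) : aG2 C p = (p.2, p.1) := rfl
lemma bG2_apply {C : Type*} [CommGroup C] (p : C × C) : bG2 C p = (p.1 * p.2, p.2⁻¹) := rfl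

theorem stmt_1 {C : Type*} [CommGroup C] (ξ : C) (orb : Set (C × C))
    (horb : orb = {p : C × C | ∃ w ∈ WG2 C, w (ξ, ξ) = p}) :
    orb = ({(ξ, ξ), (ξ⁻¹, ξ⁻¹), (ξ ^ 2, ξ⁻¹), (ξ⁻¹, ξ ^ 2), (ξ, (ξ ^ 2)⁻¹),
            ((ξ ^ 2)⁻¹, ξ)} : Set (C × C)) ∧
    (ξ = 1 → orb.ncard = 1) ∧
    (orderOf ξ = 2 → orb.ncard = 3) ∧
    (orderOf ξ = 3 → orb.ncard = 2) ∧
    (orderOf ξ = 0 ∨ 4 ≤ orderOf ξ → orb.ncard = 6) := by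
  set S : Set (C × C) := ({(ξ, ξ), (ξ⁻¹, ξ⁻¹), (ξ ^ 2, ξ⁻¹), (ξ⁻¹, ξ ^ 2), (ξ, (ξ ^ 2)⁻¹),
      ((ξ ^ 2)⁻¹, ξ)} : Set (C × C)) with hS
  have haS : ∀ p ∈ S, aG2 C p ∈ S := by
    intro p hp
    simp only [hS, Set.mem_insert_iff, Set.mem_singleton_iff] at hp ⊢
    rcases hp with h | h | h | h | h | h <;> subst h <;> simp [aG2_apply] <;> tauto
  have hbS : ∀ p ∈ S, bG2 C p ∈ S := by
    intro p hp
    simp only [hS, Set.mem_insert_iff, Set.mem_singleton_iff] at hp ⊢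
    rcases hp with h | h | h | h | h | h <;> subst h
    · right; right; left
      simp [bG2_apply, Prod.ext_iff, sq, mul_inv, mul_assoc]
    · right; right; right; right; right
      simp [bG2_apply, Prod.ext_iff, sq, mul_inv, mul_assoc]
    · left
      simp [bG2_apply, Prod.ext_iff, sq, mul_inv, mul_assoc]
    · right; right; right; right; left
      simp [bG2_apply, Prod.ext_iff, sq, mul_inv, mul_assoc]
    · right; right; right; left
      simp [bG2_apply, Prod.ext_iff, sq, mul_inv, mul_assoc]
    · right; left
      simp [bG2_apply, Prod.ext_iff, sq, mul_inv, mul_assoc]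
  have key : ∀ w ∈ WG2 C, (∀ p ∈ S, w p ∈ S) ∧ (∀ p ∈ S, w⁻¹ p ∈ S) := by
    intro w hw
    refine Subgroup.closure_induction (k := {aG2 C, bG2 C})
      (p := fun g _ => (∀ p ∈ S, g p ∈ S) ∧ (∀ p ∈ S, g⁻¹ p ∈ S)) ?_ ?_ ?_ ?_ hw
    · rintro x (rfl | rfl)
      · exact ⟨haS, by simpa [aG2] using haS⟩
      · have : (bG2 C)⁻¹ = bG2 C := by
          ext p : 1 <;> simp [bG2, Equiv.Perm.inv_def, mul_comm]
        exact ⟨hbS, by rw [this]; exact hbS⟩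
    · simp
    · rintro x y _ _ ⟨hx, hx'⟩ ⟨hy, hy'⟩
      exact ⟨fun p hp => hx _ (hy _ hp), fun p hp => by
        simpa using hy' _ (hx' _ hp)⟩
    · rintro x _ ⟨hx, hx'⟩
      exact ⟨hx', by simpa using hx⟩
  have hsub : orb ⊆ S := by
    rw [horb]
    rintro p ⟨w, hw, rfl⟩
    exact (key w hw).1 _ (by simp [hS])
  have hmem : ∀ p ∈ S, p ∈ orb := by
    have h1 : ((ξ, ξ) : C × C) ∈ orb := by
      rw [horb]; exact ⟨1, one_mem _, rfl⟩
    have hC : ((ξ ^ 2, ξ⁻¹) : C × C) ∈ orb := by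
      rw [horb]
      refine ⟨bG2 C, bG2_mem, ?_⟩
      simp [bG2_apply, sq]
    have hD : ((ξ⁻¹, ξ ^ 2) : C × C) ∈ orb := by
      rw [horb]
      refine ⟨aG2 C * bG2 C, mul_mem aG2_mem bG2_mem, ?_⟩
      simp [aG2_apply, bG2_apply, Equiv.Perm.mul_apply, sq]
    have hE : ((ξ, (ξ ^ 2)⁻¹) : C × C) ∈ orb := by
      rw [horb]
      refine ⟨bG2 C * aG2 C * bG2 C, mul_mem (mul_mem bG2_mem aG2_mem) bG2_mem, ?_⟩
      simp only [Equiv.Perm.mul_apply, aG2_apply, bG2_apply, Prod.mk.injEq]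
      constructor <;> group
    have hF : (((ξ ^ 2)⁻¹, ξ) : C × C) ∈ orb := by
      rw [horb]
      refine ⟨aG2 C * bG2 C * aG2 C * bG2 C,
        mul_mem (mul_mem (mul_mem aG2_mem bG2_mem) aG2_mem) bG2_mem, ?_⟩
      simp only [Equiv.Perm.mul_apply, aG2_apply, bG2_apply, Prod.mk.injEq]
      constructor <;> group
    have hB : ((ξ⁻¹, ξ⁻¹) : C × C) ∈ orb := by
      rw [horb]
      refine ⟨bG2 C * aG2 C * bG2 C * aG2 C * bG2 C,
        mul_mem (mul_mem (mul_mem (mul_mem bG2_mem aG2_mem) bG2_mem) aG2_mem) bG2_mem, ?_⟩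
      simp only [Equiv.Perm.mul_apply, aG2_apply, bG2_apply, Prod.mk.injEq]
      constructor <;> group
    intro p hp
    simp only [hS, Set.mem_insert_iff, Set.mem_singleton_iff] at hp
    rcases hp with h | h | h | h | h | h <;> subst h <;> assumption
  have heq : orb = S := Set.Subset.antisymm hsub fun p hp => hmem p hp
  refine ⟨heq, ?_, ?_, ?_, ?_⟩
  · rintro rfl
    rw [heq]; simp [hS]
  · intro h2
    have hx2 : ξ ^ 2 = 1 := by rw [← h2]; exact pow_orderOf_eq_one ξ
    have hx1 : ξ ≠ 1 := by
      intro h; rw [h, orderOf_one] at h2; omega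
    have hinv : ξ⁻¹ = ξ := by
      rw [inv_eq_iff_mul_eq_one, ← sq, hx2]
    have : orb = ({(ξ, ξ), (1, ξ), (ξ, 1)} : Set (C × C)) := by
      rw [heq, hS, hx2, hinv, inv_one]
      ext p
      simp only [Set.mem_insert_iff, Set.mem_singleton_iff]
      tauto
    rw [this]
    rw [Set.ncard_insert_of_notMem (by simp [Prod.ext_iff]; tauto) (Set.toFinite _),
      Set.ncard_pair (by simp [Prod.ext_iff]; tauto)]
  · intro h3
    have hx3 : ξ ^ 3 = 1 := by rw [← h3]; exact pow_orderOf_eq_one ξ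
    have hx2 : ξ ^ 2 = ξ⁻¹ := by
      rw [eq_inv_iff_mul_eq_one, ← pow_succ, hx3]
    have hx2' : (ξ ^ 2)⁻¹ = ξ := by rw [hx2, inv_inv]
    have hne : ξ ≠ ξ⁻¹ := by
      intro h
      have : ξ ^ 2 = 1 := by rw [sq, ← inv_eq_iff_mul_eq_one] at *; rw [← h]
      have := orderOf_dvd_of_pow_eq_one this
      rw [h3] at this; omega
    have : orb = ({(ξ, ξ), (ξ⁻¹, ξ⁻¹)} : Set (C × C)) := by
      rw [heq, hS, hx2, inv_inv]
      ext p
      simp only [Set.mem_insert_iff, Set.mem_singleton_iff]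
      tauto
    rw [this, Set.ncard_pair (by simp [Prod.ext_iff]; tauto)]
  · intro hord
    have hne : ∀ n : ℕ, 0 < n → n ≤ 3 → ξ ^ n ≠ 1 := by
      intro n hn hn3 h
      have hd := orderOf_dvd_of_pow_eq_one h
      rcases hord with h0 | h4
      · rw [h0] at hd; omega
      · have := Nat.le_of_dvd hn hd; omega
    have h1 : ξ ≠ 1 := by simpa using hne 1 (by omega) (by omega)
    have h2 : ξ ^ 2 ≠ 1 := hne 2 (by omega) (by omega)
    have h3 : ξ ^ 3 ≠ 1 := hne 3 (by omega) (by omega)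
    have hz : ∀ k : ℤ, ξ ^ k = 1 → 0 < k → k ≤ 3 → False := by
      intro k hk h0 h3'
      lift k to ℕ using le_of_lt h0
      rw [zpow_natCast] at hk
      exact hne k (by exact_mod_cast h0) (by exact_mod_cast h3') hk
    have hd : ∀ a b : ℤ, 0 < b - a → b - a ≤ 3 → ξ ^ a ≠ ξ ^ b := by
      intro a b hb1 hb2 h
      exact hz (b - a) (by rw [zpow_sub, ← h]; simp) hb1 hb2
    have d1 : ξ ≠ ξ⁻¹ := by simpa using (hd (-1) 1 (by norm_num) (by norm_num)).symm
    have d2 : ξ ≠ ξ ^ 2 := by simpa [zpow_two, sq] using hd 1 2 (by norm_num) (by norm_num)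
    have d3 : ξ ≠ (ξ ^ 2)⁻¹ := by simpa [zpow_two, sq] using (hd (-2) 1 (by norm_num) (by norm_num)).symm
    have d4 : ξ⁻¹ ≠ ξ ^ 2 := by simpa [zpow_two, sq] using hd (-1) 2 (by norm_num) (by norm_num)
    have d5 : ξ⁻¹ ≠ (ξ ^ 2)⁻¹ := by simpa [zpow_two, sq] using (hd (-2) (-1) (by norm_num) (by norm_num)).symm
    have d1' := d1.symm; have d2' := d2.symm; have d3' := d3.symm
    have d4' := d4.symm; have d5' := d5.symm
    rw [heq, hS]
    rw [Set.ncard_insert_of_notMem (by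
        simp only [Set.mem_insert_iff, Set.mem_singleton_iff, Prod.mk.injEq]
        push_neg; tauto) (Set.toFinite _),
      Set.ncard_insert_of_notMem (by
        simp only [Set.mem_insert_iff, Set.mem_singleton_iff, Prod.mk.injEq]
        push_neg; tauto) (Set.toFinite _),
      Set.ncard_insert_of_notMem (by
        simp only [Set.mem_insert_iff, Set.mem_singleton_iff, Prod.mk.injEq]
        push_neg; tauto) (Set.toFinite _),
      Set.ncard_insert_of_notMem (by
        simp only [Set.mem_insert_iff, Set.mem_singleton_iff, Prod.mk.injEq]
        push_neg; tauto) (Set.toFinite _),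
      Set.ncard_pair (by simp only [ne_eq, Prod.mk.injEq]; push_neg; tauto)]
end

section
/- Let ξ ∈ C with ξ ≠ 1, ξ² ≠ 1 and ξ³ ≠ 1. Then the stabilizer of (ξ, ξ) in W equals {1, a}; in particular it is cyclic of order 2. -/
abbrev MatZ := ℤ × ℤ × ℤ × ℤ

def actG2 {C : Type*} [CommGroup C] (m : MatZ) (p : C × C) : C × C :=
  (p.1 ^ m.1 * p.2 ^ m.2.1, p.1 ^ m.2.2.1 * p.2 ^ m.2.2.2)

def mulM (m n : MatZ) : MatZ :=
  (m.1 * n.1 + m.2.1 * n.2.2.1, m.1 * n.2.1 + m.2.1 * n.2.2.2,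
   m.2.2.1 * n.1 + m.2.2.2 * n.2.2.1, m.2.2.1 * n.2.1 + m.2.2.2 * n.2.2.2)

def invM (m : MatZ) : MatZ :=
  let d := m.1 * m.2.2.2 - m.2.1 * m.2.2.1
  (d * m.2.2.2, -(d * m.2.1), -(d * m.2.2.1), d * m.1)

def TG2 : List MatZ :=
  [(1,0,0,1), (0,1,1,0), (1,1,0,-1), (-1,-1,0,1), (-1,-1,1,0), (-1,0,0,-1),
   (-1,0,1,1), (0,-1,-1,0), (0,-1,1,1), (0,1,-1,-1), (1,0,-1,-1), (1,1,-1,0)]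

lemma act_act {C : Type*} [CommGroup C] (m n : MatZ) (p : C × C) :
    actG2 m (actG2 n p) = actG2 (mulM m n) p := by
  simp only [actG2, mulM, Prod.mk.injEq, mul_zpow, ← zpow_mul, zpow_add]
  constructor <;> · rw [mul_mul_mul_comm] ; ring_nf

lemma act_id {C : Type*} [CommGroup C] (p : C × C) : actG2 ((1,0,0,1) : MatZ) p = p := by
  simp [actG2]

lemma TG2_mul : ∀ m ∈ TG2, ∀ n ∈ TG2, mulM m n ∈ TG2 := by decide

lemma TG2_inv : ∀ m ∈ TG2, invM m ∈ TG2 ∧ mulM m (invM m) = ((1,0,0,1) : MatZ) := by decide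

lemma mem_WG2 {C : Type*} [CommGroup C] (w : Equiv.Perm (C × C)) (hw : w ∈ WG2 C) :
    ∃ m ∈ TG2, ∀ p : C × C, w p = actG2 m p := by
  refine Subgroup.closure_induction ?_ ?_ ?_ ?_ hw
  · rintro x (rfl | rfl)
    · exact ⟨(0,1,1,0), by decide, fun p => by simp [aG2, actG2]⟩
    · exact ⟨(1,1,0,-1), by decide, fun p => by simp [bG2, actG2]⟩
  · exact ⟨(1,0,0,1), by decide, fun p => (act_id p).symm⟩
  · rintro x y _ _ ⟨m, hm, hx⟩ ⟨n, hn, hy⟩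
    exact ⟨mulM m n, TG2_mul m hm n hn, fun p => by
      simp only [Equiv.Perm.mul_apply, hy, hx, act_act]⟩
  · rintro x _ ⟨m, hm, hx⟩
    obtain ⟨hmem, hmul⟩ := TG2_inv m hm
    refine ⟨invM m, hmem, fun p => x.injective ?_⟩
    rw [show x (x⁻¹ p) = p from x.apply_symm_apply p, hx, act_act, hmul, act_id]

lemma pow_eq_aux {C : Type*} [CommGroup C] (ξ : C) (a b : ℤ) (h : ξ ^ a * ξ ^ b = ξ) :
    ξ ^ (a + b - 1) = 1 := by
  rw [zpow_sub, zpow_add, h, zpow_one]; simp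

lemma bad {C : Type*} [CommGroup C] (ξ : C) (h1 : ξ ≠ 1) (h2 : ξ ^ 2 ≠ 1) (h3 : ξ ^ 3 ≠ 1)
    (a b : ℤ) (hab : a + b = 2 ∨ a + b = -1 ∨ a + b = -2)
    (h : ξ ^ a * ξ ^ b = ξ) : False := by
  have hs := pow_eq_aux ξ a b h
  rcases hab with h' | h' | h' <;> rw [h'] at hs <;> norm_num at hs
  · exact h1 hs
  · exact h2 (by simpa [zpow_neg] using hs)
  · exact h3 (by simpa [zpow_neg] using hs)

theorem stmt_5 {C : Type*} [CommGroup C] (ξ : C) (h1 : ξ ≠ 1) (h2 : ξ ^ 2 ≠ 1)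
    (h3 : ξ ^ 3 ≠ 1) :
    {w : Equiv.Perm (C × C) | w ∈ WG2 C ∧ w (ξ, ξ) = (ξ, ξ)} =
      ({1, aG2 C} : Set (Equiv.Perm (C × C))) ∧
    aG2 C ≠ 1 ∧ (aG2 C) ^ 2 = 1 ∧
    Set.ncard {w : Equiv.Perm (C × C) | w ∈ WG2 C ∧ w (ξ, ξ) = (ξ, ξ)} = 2 := by
  have ane : aG2 C ≠ 1 := by
    intro h
    have : (aG2 C) (ξ, 1) = (ξ, 1) := by rw [h]; rfl
    exact h1 (congrArg Prod.snd this)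
  have hset : {w : Equiv.Perm (C × C) | w ∈ WG2 C ∧ w (ξ, ξ) = (ξ, ξ)} =
      ({1, aG2 C} : Set (Equiv.Perm (C × C))) := by
    ext w
    constructor
    · rintro ⟨hW, hfix⟩
      obtain ⟨m, hm, hw⟩ := mem_WG2 w hW
      have key : actG2 m (ξ, ξ) = ((ξ, ξ) : C × C) := by rw [← hw]; exact hfix
      fin_cases hm <;>
        simp only [actG2, Prod.mk.injEq] at key
      · exact Or.inl (Equiv.ext fun p => by rw [hw, act_id]; rfl)
      · exact Or.inr (Equiv.ext fun p => by rw [hw]; simp [actG2, aG2])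
      · exfalso; refine bad ξ h1 h2 h3 _ _ ?_ key.1; norm_num
      · exfalso; refine bad ξ h1 h2 h3 _ _ ?_ key.1; norm_num
      · exfalso; refine bad ξ h1 h2 h3 _ _ ?_ key.1; norm_num
      · exfalso; refine bad ξ h1 h2 h3 _ _ ?_ key.1; norm_num
      · exfalso; refine bad ξ h1 h2 h3 _ _ ?_ key.1; norm_num
      · exfalso; refine bad ξ h1 h2 h3 _ _ ?_ key.1; norm_num
      · exfalso; refine bad ξ h1 h2 h3 _ _ ?_ key.1; norm_num
      · exfalso; refine bad ξ h1 h2 h3 _ _ ?_ key.2; norm_num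
      · exfalso; refine bad ξ h1 h2 h3 _ _ ?_ key.2; norm_num
      · exfalso; refine bad ξ h1 h2 h3 _ _ ?_ key.1; norm_num
    · rintro (rfl | rfl)
      · exact ⟨one_mem _, rfl⟩
      · exact ⟨Subgroup.subset_closure (Or.inl rfl), rfl⟩
  refine ⟨hset, ane, Equiv.ext fun p => ?_, ?_⟩
  · simp [pow_succ, aG2]
  · rw [hset, Set.ncard_pair ane.symm]
end

section
/- Let x, y ∈ ℂ^× and let θ : ℤ² → ℂ^× be the homomorphism θ(m,n) = x^m y^n. Let q ∈ ℂ^× be an element of infinite order, and set S = {γ ∈ R : θ(γ) = q}. Then: (i) S never contains both γ and −γ; (ii) the cardinality of S belongs to {0, 1, 2, 4} (in particular it is never 3); and (iii) if S has exactly 4 elements, then there exist γ₀ ∈ ℤ² and a short root δ such that S = {γ₀, γ₀ + δ, γ₀ + 2δ, γ₀ + 3δ}. -/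
/-- The twelve roots of G₂ in coordinates with respect to the basis (α∨, β∨). -/
def G2Roots : Set (ℤ × ℤ) :=
  {(1, 0), (-1, 0), (0, 1), (0, -1), (1, 1), (-1, -1), (1, 2), (-1, -2),
    (1, 3), (-1, -3), (2, 3), (-2, -3)}

/-- The six long roots of G₂. -/
def G2Long : Set (ℤ × ℤ) := {(1, 0), (-1, 0), (1, 3), (-1, -3), (2, 3), (-2, -3)}

/-- The six short roots of G₂. -/
def G2Short : Set (ℤ × ℤ) := {(0, 1), (0, -1), (1, 1), (-1, -1), (1, 2), (-1, -2)}

namespace Stmt12Aux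

/-- The roots as a list. -/
def R12l : List (ℤ × ℤ) :=
  [(1, 0), (-1, 0), (0, 1), (0, -1), (1, 1), (-1, -1), (1, 2), (-1, -2),
    (1, 3), (-1, -3), (2, 3), (-2, -3)]

/-- The six 4-point lines: base point and (short) direction. -/
def lineData : List ((ℤ × ℤ) × (ℤ × ℤ)) :=
  [((1,0),(0,1)), ((-1,-3),(0,1)), ((-1,0),(1,1)), ((1,0),(-1,-1)),
   ((-1,-3),(1,2)), ((1,3),(-1,-2))]

/-- The four points of a line. -/
def pts (d : (ℤ × ℤ) × (ℤ × ℤ)) : List (ℤ × ℤ) :=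
  [d.1, d.1 + (1:ℤ) • d.2, d.1 + (2:ℤ) • d.2, d.1 + (3:ℤ) • d.2]

lemma mem_G2Roots_iff (γ : ℤ × ℤ) : γ ∈ G2Roots ↔ γ ∈ R12l := by
  simp [G2Roots, R12l]

set_option maxHeartbeats 4000000 in
lemma classify : ∀ a ∈ R12l, ∀ b ∈ R12l, ∀ c ∈ R12l,
    (a ≠ b ∧ a ≠ c ∧ b ≠ c ∧ (b.1-a.1)*(c.2-a.2) - (b.2-a.2)*(c.1-a.1) = 0) →
    ∃ d ∈ lineData, a ∈ pts d ∧ b ∈ pts d ∧ c ∈ pts d := by decide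

lemma uniq : ∀ d ∈ lineData, ∀ d' ∈ lineData, ∀ a ∈ pts d, ∀ b ∈ pts d,
    (a ∈ pts d' ∧ b ∈ pts d' ∧ a ≠ b) → d = d' := by decide

lemma roots_mem : ∀ d ∈ lineData, ∀ p ∈ pts d, p ∈ R12l := by decide

lemma p0_ne_p1 : ∀ d ∈ lineData, d.1 ≠ d.1 + (1:ℤ) • d.2 := by decide

lemma mem_pts {d : (ℤ × ℤ) × (ℤ × ℤ)} {a : ℤ × ℤ} (h : a ∈ pts d) :
    ∃ i : ℤ, 0 ≤ i ∧ i ≤ 3 ∧ a = d.1 + i • d.2 := by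
  simp only [pts, List.mem_cons, List.mem_singleton, List.not_mem_nil, or_false] at h
  rcases h with h | h | h | h
  · exact ⟨0, by norm_num, by simp [h]⟩
  · exact ⟨1, by norm_num, by norm_num, h⟩
  · exact ⟨2, by norm_num, by norm_num, h⟩
  · exact ⟨3, by norm_num, by norm_num, h⟩

lemma pts_mem {d : (ℤ × ℤ) × (ℤ × ℤ)} {i : ℤ} (h0 : 0 ≤ i) (h3 : i ≤ 3) :
    d.1 + i • d.2 ∈ pts d := by
  interval_cases i
  · simp [pts]
  · simp [pts]
  · simp [pts]
  · simp [pts]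

lemma consec {i j k : ℤ} (hi0 : 0 ≤ i) (hi3 : i ≤ 3) (hj0 : 0 ≤ j) (hj3 : j ≤ 3)
    (hk0 : 0 ≤ k) (hk3 : k ≤ 3) (hij : i ≠ j) (hik : i ≠ k) (hjk : j ≠ k) :
    j = i + 1 ∨ i = j + 1 ∨ k = i + 1 ∨ i = k + 1 ∨ k = j + 1 ∨ j = k + 1 := by
  omega

end Stmt12Aux

open Stmt12Aux in
theorem stmt_12 (x y q : ℂˣ) (hq : ¬ IsOfFinOrder q)
    (S : Set (ℤ × ℤ))
    (hS : S = {γ ∈ G2Roots | x ^ γ.1 * y ^ γ.2 = q}) :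
    (∀ γ ∈ S, -γ ∉ S) ∧
    S.ncard ∈ ({0, 1, 2, 4} : Set ℕ) ∧
    (S.ncard = 4 → ∃ γ₀ : ℤ × ℤ, ∃ δ ∈ G2Short,
      S = {γ₀, γ₀ + δ, γ₀ + 2 • δ, γ₀ + 3 • δ}) := by
  -- the character θ
  set th : ℤ × ℤ → ℂˣ := fun γ => x ^ γ.1 * y ^ γ.2 with hth
  have th_add : ∀ u v : ℤ × ℤ, th (u + v) = th u * th v := by
    intro u v
    simp only [hth, Prod.fst_add, Prod.snd_add, zpow_add]
    exact mul_mul_mul_comm _ _ _ _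
  have th_smul : ∀ (n : ℤ) (u : ℤ × ℤ), th (n • u) = th u ^ n := by
    intro n u
    simp only [hth, Prod.smul_fst, Prod.smul_snd, smul_eq_mul]
    rw [mul_comm n u.1, mul_comm n u.2, zpow_mul, zpow_mul, ← mul_zpow]
  have ord : ∀ n : ℤ, q ^ n = 1 → n = 0 := by
    intro n h
    by_contra hn
    exact hq (isOfFinOrder_iff_zpow_eq_one.mpr ⟨n, hn, h⟩)
  have hmem : ∀ γ, γ ∈ S ↔ (γ ∈ G2Roots ∧ th γ = q) := by
    intro γ; rw [hS]; rfl
  have diff1 : ∀ a b : ℤ × ℤ, a ∈ S → b ∈ S → th (b - a) = 1 := by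
    intro a b ha hb
    have h1 := ((hmem a).mp ha).2
    have h2 := ((hmem b).mp hb).2
    have e : th (b - a) * th a = th b := by rw [← th_add, sub_add_cancel]
    rw [h1, h2] at e
    exact mul_right_cancel (b := q) (by rw [e, one_mul])
  have collin : ∀ a b c : ℤ × ℤ, a ∈ S → b ∈ S → c ∈ S →
      (b.1 - a.1) * (c.2 - a.2) - (b.2 - a.2) * (c.1 - a.1) = 0 := by
    intro a b c ha hb hc
    have hu : th (b - a) = 1 := diff1 a b ha hb
    have hv : th (c - a) = 1 := diff1 a c ha hc
    have ha' : th a = q := ((hmem a).mp ha).2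
    set u := b - a
    set v := c - a
    set dd : ℤ := u.1 * v.2 - u.2 * v.1 with hdd
    have key : dd • a = (a.1 * v.2 - a.2 * v.1) • u + (u.1 * a.2 - u.2 * a.1) • v := by
      refine Prod.ext ?_ ?_ <;>
        simp only [Prod.smul_fst, Prod.smul_snd, Prod.fst_add, Prod.snd_add, smul_eq_mul] <;>
        ring
    have hq1 : q ^ dd = 1 := by
      rw [← ha', ← th_smul, key, th_add, th_smul, th_smul, hu, hv, one_zpow, one_zpow, one_mul]
    have h0 := ord dd hq1
    have : dd = (b.1 - a.1) * (c.2 - a.2) - (b.2 - a.2) * (c.1 - a.1) := by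
      simp [hdd, u, v]
    omega
  have hfin : S.Finite := by
    rw [hS]
    have hG : G2Roots = (↑(R12l.toFinset) : Set (ℤ × ℤ)) := by
      rw [List.coe_toFinset]
      exact Set.ext mem_G2Roots_iff
    exact Set.Finite.subset (hG ▸ (R12l.toFinset.finite_toSet)) (Set.sep_subset _ _)
  -- part (i)
  have part1 : ∀ γ ∈ S, -γ ∉ S := by
    intro γ hγ hneg
    have h1 := ((hmem γ).mp hγ).2
    have h2 := ((hmem (-γ)).mp hneg).2
    have e : th (γ + -γ) = q * q := by rw [th_add, h1, h2]
    rw [add_neg_cancel] at e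
    have e0 : th 0 = 1 := by
      simp [hth]
    rw [e0] at e
    have : q ^ (2 : ℤ) = 1 := by rw [zpow_two, ← e]
    have := ord 2 this
    omega
  -- master dichotomy
  have master : S.ncard ≤ 2 ∨ ∃ d ∈ lineData, S = {γ | γ ∈ pts d} := by
    by_cases hbig : 2 < S.ncard
    · right
      obtain ⟨a, ha, b, hb, c, hc, hab, hac, hbc⟩ := (Set.two_lt_ncard hfin).mp hbig
      have hcol := collin a b c ha hb hc
      have haR := (mem_G2Roots_iff a).mp ((hmem a).mp ha).1
      have hbR := (mem_G2Roots_iff b).mp ((hmem b).mp hb).1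
      have hcR := (mem_G2Roots_iff c).mp ((hmem c).mp hc).1
      obtain ⟨d, hd, had, hbd, hcd⟩ := classify a haR b hbR c hcR ⟨hab, hac, hbc, hcol⟩
      obtain ⟨i, hi0, hi3, hai⟩ := mem_pts had
      obtain ⟨j, hj0, hj3, haj⟩ := mem_pts hbd
      obtain ⟨k, hk0, hk3, hak⟩ := mem_pts hcd
      have hij : i ≠ j := fun h => hab (by rw [hai, haj, h])
      have hik : i ≠ k := fun h => hac (by rw [hai, hak, h])
      have hjk : j ≠ k := fun h => hbc (by rw [haj, hak, h])
      -- a consecutive pair exists, hence th d.2 = 1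
      have key : ∀ (u v : ℤ × ℤ) (iu iv : ℤ), u ∈ S → v ∈ S →
          u = d.1 + iu • d.2 → v = d.1 + iv • d.2 → iv = iu + 1 → th d.2 = 1 := by
        intro u v iu iv hu hv hu' hv' hcons
        have h1 := diff1 u v hu hv
        have e : v - u = d.2 := by
          rw [hu', hv', hcons]
          have : (iu + 1) • d.2 = iu • d.2 + d.2 := by rw [add_smul, one_smul]
          rw [this]
          abel
        rwa [e] at h1
      have hFδ : th d.2 = 1 := by
        rcases consec hi0 hi3 hj0 hj3 hk0 hk3 hij hik hjk with h | h | h | h | h | h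
        · exact key a b i j ha hb hai haj h
        · exact key b a j i hb ha haj hai h
        · exact key a c i k ha hc hai hak h
        · exact key c a k i hc ha hak hai h
        · exact key b c j k hb hc haj hak h
        · exact key c b k j hc hb hak haj h
      have hq_a : th a = q := ((hmem a).mp ha).2
      have hall : ∀ m : ℤ, 0 ≤ m → m ≤ 3 → d.1 + m • d.2 ∈ S := by
        intro m hm0 hm3
        refine (hmem _).mpr ⟨?_, ?_⟩
        · exact (mem_G2Roots_iff _).mpr (roots_mem d hd _ (pts_mem hm0 hm3))
        · have e : d.1 + m • d.2 = a + (m - i) • d.2 := by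
            rw [hai]
            have : (m - i) • d.2 = m • d.2 - i • d.2 := by rw [sub_smul]
            rw [this]
            abel
          rw [e, th_add, th_smul, hFδ, one_zpow, mul_one, hq_a]
      have hall' : ∀ p ∈ pts d, p ∈ S := by
        intro p hp
        obtain ⟨m, hm0, hm3, rfl⟩ := mem_pts hp
        exact hall m hm0 hm3
      refine ⟨d, hd, ?_⟩
      ext γ
      simp only [Set.mem_setOf_eq]
      constructor
      · intro hγ
        by_contra hγl
        have hp0 : d.1 ∈ S := by
          have := hall 0 (by norm_num) (by norm_num)
          simpa using this
        have hp1 : d.1 + (1:ℤ) • d.2 ∈ S := hall 1 (by norm_num) (by norm_num)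
        have hne01 := p0_ne_p1 d hd
        have hγ0 : γ ≠ d.1 := fun h => hγl (h ▸ (by simp [pts]))
        have hγ1 : γ ≠ d.1 + (1:ℤ) • d.2 := fun h => hγl (h ▸ (by simp [pts]))
        have hγR := (mem_G2Roots_iff γ).mp ((hmem γ).mp hγ).1
        have h0R := (mem_G2Roots_iff _).mp ((hmem _).mp hp0).1
        have h1R := (mem_G2Roots_iff _).mp ((hmem _).mp hp1).1
        have hcol2 := collin γ d.1 (d.1 + (1:ℤ) • d.2) hγ hp0 hp1
        obtain ⟨d', hd', hγd', h0d', h1d'⟩ :=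
          classify γ hγR d.1 h0R (d.1 + (1:ℤ) • d.2) h1R ⟨hγ0, hγ1, hne01, hcol2⟩
        have hdd' : d = d' := by
          refine uniq d hd d' hd' d.1 ?_ (d.1 + (1:ℤ) • d.2) ?_ ⟨h0d', h1d', hne01⟩
          · simp [pts]
          · simp [pts]
        exact hγl (hdd' ▸ hγd')
      · exact fun hγ => hall' γ hγ
    · left; omega
  have card4 : ∀ d ∈ lineData, ({γ | γ ∈ pts d} : Set (ℤ × ℤ)).ncard = 4 := by
    intro d hd
    rw [← List.coe_toFinset, Set.ncard_coe_finset]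
    fin_cases hd <;> decide
  refine ⟨part1, ?_, ?_⟩
  · rcases master with h | ⟨d, hd, hSd⟩
    · simp only [Set.mem_insert_iff, Set.mem_singleton_iff]
      omega
    · rw [hSd, card4 d hd]
      simp
  · intro hnc
    rcases master with h | ⟨d, hd, hSd⟩
    · omega
    · refine ⟨d.1, d.2, ?_, ?_⟩
      · fin_cases hd <;> simp [G2Short]
      · rw [hSd]
        ext γ
        fin_cases hd <;>
          simp [pts, Set.mem_insert_iff, Set.mem_singleton_iff, Prod.ext_iff]
end

section
/- Let γ, γ' ∈ R be linearly independent over ℚ. Then the index of the subgroup ℤγ + ℤγ' in ℤ² equals 3 if γ and γ' are both long, equals 2 if B(γ, γ') = 0 (i.e. γ ⊥ γ'), and equals 1 in all other cases. In particular the index is always at most 3, as asserted in the proof of Theorem 5.2 of the paper. -/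
lemma index_closure_pair (a b c d : ℤ) (hcd : Int.gcd c d = 1) (hΔ : a * d - b * c ≠ 0) :
    (AddSubgroup.closure {((a, b) : ℤ × ℤ), (c, d)}).index = (a * d - b * c).natAbs := by
  set k : ℕ := (a * d - b * c).natAbs with hk
  let φ : ℤ × ℤ →+ ZMod k :=
    { toFun := fun p => ((d * p.1 - c * p.2 : ℤ) : ZMod k)
      map_zero' := by simp
      map_add' := by
        intro p q
        simp only [Prod.fst_add, Prod.snd_add]
        push_cast
        ring }
  have hφ : ∀ p : ℤ × ℤ, φ p = ((d * p.1 - c * p.2 : ℤ) : ZMod k) := fun p => rfl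
  have hdvd_iff : ∀ z : ℤ, ((z : ZMod k) = 0) ↔ (a * d - b * c) ∣ z := by
    intro z
    rw [ZMod.intCast_zmod_eq_zero_iff_dvd, hk, Int.natAbs_dvd]
  have hcop : IsCoprime c d := Int.isCoprime_iff_gcd_eq_one.mpr hcd
  have hker : φ.ker = AddSubgroup.closure {((a, b) : ℤ × ℤ), (c, d)} := by
    apply le_antisymm
    · rintro ⟨x, y⟩ hp
      rw [AddMonoidHom.mem_ker, hφ, hdvd_iff] at hp
      rw [AddSubgroup.mem_closure_pair]
      simp only at hp
      obtain ⟨t, ht⟩ := hp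
      have h2 : (a * d - b * c) ∣ a * y - b * x := by
        obtain ⟨u, v, huv⟩ := hcop
        have hc : (a * d - b * c) ∣ c * (a * y - b * x) :=
          ⟨x - a * t, by linear_combination -a * ht⟩
        have hd : (a * d - b * c) ∣ d * (a * y - b * x) :=
          ⟨y - b * t, by linear_combination -b * ht⟩
        have hrw : a * y - b * x = u * (c * (a * y - b * x)) + v * (d * (a * y - b * x)) := by
          linear_combination (-(a * y - b * x)) * huv
        rw [hrw]
        exact dvd_add (hc.mul_left u) (hd.mul_left v)
      obtain ⟨s, hs⟩ := h2
      refine ⟨t, s, ?_⟩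
      have h1 : a * t + c * s = x :=
        mul_left_cancel₀ hΔ (by linear_combination -a * ht - c * hs)
      have h2' : b * t + d * s = y :=
        mul_left_cancel₀ hΔ (by linear_combination -b * ht - d * hs)
      simp only [Prod.smul_mk, smul_eq_mul, Prod.mk_add_mk, Prod.mk.injEq]
      constructor <;> linarith
    · rw [AddSubgroup.closure_le]
      rintro p (rfl | rfl)
      · show φ (a, b) = 0
        rw [hφ, hdvd_iff]
        exact ⟨1, by ring⟩
      · show φ (c, d) = 0
        rw [hφ, hdvd_iff]
        exact ⟨0, by ring⟩
  have hsurj : Function.Surjective φ := by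
    obtain ⟨u, v, huv⟩ := hcop
    intro t
    obtain ⟨z, rfl⟩ := ZMod.intCast_surjective t
    refine ⟨(z * v, -(z * u)), ?_⟩
    rw [hφ]
    simp only
    congr 1
    linear_combination z * huv
  rw [← hker, AddSubgroup.index_ker,
    (AddMonoidHom.range_eq_top (f := φ)).mpr hsurj]
  exact (Nat.card_congr AddSubgroup.topEquiv.toEquiv).trans (Nat.card_zmod k)
/-- The symmetric bilinear form B((m,n),(m',n')) = 6mm' + 2nn' − 3(mn' + m'n). -/
def G2Form (p p' : ℤ × ℤ) : ℤ :=
  6 * p.1 * p'.1 + 2 * p.2 * p'.2 - 3 * (p.1 * p'.2 + p'.1 * p.2)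

set_option maxHeartbeats 1000000 in
theorem stmt_14 (γ γ' : ℤ × ℤ) (hγ : γ ∈ G2Roots) (hγ' : γ' ∈ G2Roots)
    (hindep : ∀ m n : ℤ, m • γ + n • γ' = 0 → m = 0 ∧ n = 0)
    (H : AddSubgroup (ℤ × ℤ)) (hH : H = AddSubgroup.closure {γ, γ'}) :
    (γ ∈ G2Long ∧ γ' ∈ G2Long → H.index = 3) ∧
    (G2Form γ γ' = 0 → H.index = 2) ∧
    (¬(γ ∈ G2Long ∧ γ' ∈ G2Long) → G2Form γ γ' ≠ 0 → H.index = 1) ∧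
    H.index ≤ 3 := by
  simp only [G2Roots, Set.mem_insert_iff, Set.mem_singleton_iff] at hγ hγ'
  subst hH
  rcases hγ with rfl|rfl|rfl|rfl|rfl|rfl|rfl|rfl|rfl|rfl|rfl|rfl <;>
    rcases hγ' with rfl|rfl|rfl|rfl|rfl|rfl|rfl|rfl|rfl|rfl|rfl|rfl <;>
    first
      | exact absurd (hindep 1 (-1) (by decide)).1 one_ne_zero
      | exact absurd (hindep 1 1 (by decide)).1 one_ne_zero
      | · rw [index_closure_pair _ _ _ _ (by decide) (by decide)]
          simp only [G2Long, G2Form, Set.mem_insert_iff, Set.mem_singleton_iff]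
          decide
end
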